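/- Let m ≥ 3 and n ≥ 3, and suppose each agent with peak p evaluates distributions by the ℓ1 utility u_p(q) = −∑_j |p_j − q_j|. Then there is no mechanism f : (Δ^m)^n → Δ^m that simultaneously satisfies efficiency, strategyproofness, and proportionality. -/

import Mathlib

/-- ℓ1 utility of an agent with peak `p` at distribution `q`. -/
def l1u {m : ℕ} (p q : Fin m → ℝ) : ℝ := -∑ j, |p j - q j|

private lemma sum_split3 {m : ℕ} (c0 c1 c2 : Fin m) (h01 : c0 ≠ c1) (h02 : c0 ≠ c2)
    (h12 : c1 ≠ c2) (g : Fin m → ℝ) :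
    ∑ j ∈ Finset.univ \ {c0, c1, c2}, g j = (∑ j, g j) - (g c0 + g c1 + g c2) := by
  have h := Finset.sum_sdiff (f := g) (Finset.subset_univ ({c0, c1, c2} : Finset (Fin m)))
  have ht : ∑ j ∈ ({c0, c1, c2} : Finset (Fin m)), g j = g c0 + g c1 + g c2 := by
    rw [Finset.sum_insert (by simp [h01, h02]), Finset.sum_insert (by simp [h12]),
      Finset.sum_singleton]
    ring
  rw [ht] at h
  linarith

private lemma notmem3 {m : ℕ} {c0 c1 c2 j : Fin m}
    (hj : j ∈ Finset.univ \ ({c0, c1, c2} : Finset (Fin m))) :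
    j ≠ c0 ∧ j ≠ c1 ∧ j ≠ c2 := by
  rw [Finset.mem_sdiff, Finset.mem_insert, Finset.mem_insert, Finset.mem_singleton] at hj
  push_neg at hj
  exact hj.2

private lemma dist_sum3 {m : ℕ} (c0 c1 c2 : Fin m) (h01 : c0 ≠ c1) (h02 : c0 ≠ c2)
    (h12 : c1 ≠ c2) (p q : Fin m → ℝ) (hq0 : ∀ j, 0 ≤ q j) (hq1 : ∑ j, q j = 1)
    (hp : ∀ j, j ≠ c0 → j ≠ c1 → j ≠ c2 → p j = 0) :
    ∑ j, |p j - q j|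
      = |p c0 - q c0| + |p c1 - q c1| + |p c2 - q c2| + (1 - (q c0 + q c1 + q c2)) := by
  have hd := Finset.sum_sdiff (f := fun j => |p j - q j|)
    (Finset.subset_univ ({c0, c1, c2} : Finset (Fin m)))
  have ht : ∑ j ∈ ({c0, c1, c2} : Finset (Fin m)), |p j - q j|
      = |p c0 - q c0| + |p c1 - q c1| + |p c2 - q c2| := by
    rw [Finset.sum_insert (by simp [h01, h02]), Finset.sum_insert (by simp [h12]),
      Finset.sum_singleton]
    ring
  have hrest : ∑ j ∈ Finset.univ \ ({c0, c1, c2} : Finset (Fin m)), |p j - q j|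
      = ∑ j ∈ Finset.univ \ ({c0, c1, c2} : Finset (Fin m)), q j := by
    refine Finset.sum_congr rfl (fun j hj => ?_)
    obtain ⟨hj0, hj1, hj2⟩ := notmem3 hj
    rw [hp j hj0 hj1 hj2, zero_sub, abs_neg, abs_of_nonneg (hq0 j)]
  have hqs := sum_split3 c0 c1 c2 h01 h02 h12 q
  rw [hq1] at hqs
  rw [ht, hrest, hqs] at hd
  linarith

private lemma tri_le_one {m : ℕ} (c0 c1 c2 : Fin m) (h01 : c0 ≠ c1) (h02 : c0 ≠ c2)
    (h12 : c1 ≠ c2) (q : Fin m → ℝ) (hq0 : ∀ j, 0 ≤ q j) (hq1 : ∑ j, q j = 1) :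
    q c0 + q c1 + q c2 ≤ 1 := by
  have hqs := sum_split3 c0 c1 c2 h01 h02 h12 q
  rw [hq1] at hqs
  have hnn : (0:ℝ) ≤ ∑ j ∈ Finset.univ \ ({c0, c1, c2} : Finset (Fin m)), q j :=
    Finset.sum_nonneg (fun j _ => hq0 j)
  linarith

private lemma tri_eq_one {m : ℕ} (c0 c1 c2 : Fin m) (h01 : c0 ≠ c1) (h02 : c0 ≠ c2)
    (h12 : c1 ≠ c2) (q : Fin m → ℝ) (hq1 : ∑ j, q j = 1)
    (hz : ∀ j, j ≠ c0 → j ≠ c1 → j ≠ c2 → q j = 0) :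
    q c0 + q c1 + q c2 = 1 := by
  have hqs := sum_split3 c0 c1 c2 h01 h02 h12 q
  rw [hq1] at hqs
  have hzz : ∑ j ∈ Finset.univ \ ({c0, c1, c2} : Finset (Fin m)), q j = 0 :=
    Finset.sum_eq_zero (fun j hj => by
      obtain ⟨hj0, hj1, hj2⟩ := notmem3 hj
      exact hz j hj0 hj1 hj2)
  linarith

private lemma single_mem {m : ℕ} [NeZero m] (c : Fin m) :
    (Pi.single c 1 : Fin m → ℝ) ∈ stdSimplex ℝ (Fin m) := by
  constructor
  · intro j
    rw [Pi.single_apply]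
    split_ifs <;> norm_num
  · rw [Finset.sum_pi_single']
    simp

private lemma pair_mem {m : ℕ} [NeZero m] (c d : Fin m) (a : ℝ) (h0 : 0 ≤ a) (h1 : a ≤ 1) :
    (fun j => (Pi.single c a : Fin m → ℝ) j + (Pi.single d (1 - a) : Fin m → ℝ) j) ∈ stdSimplex ℝ (Fin m) := by
  constructor
  · intro j
    simp only [Pi.single_apply]
    split_ifs <;> linarith
  · rw [Finset.sum_add_distrib, Finset.sum_pi_single', Finset.sum_pi_single']
    simp

private lemma move_mem {m : ℕ} (q : Fin m → ℝ) (hq0 : ∀ l, 0 ≤ q l) (hq1 : ∑ l, q l = 1)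
    (j k : Fin m) (hjk : j ≠ k) (ε : ℝ) (hε0 : 0 ≤ ε) (hεj : ε ≤ q j) :
    (fun l => q l + ε * (Pi.single k 1 : Fin m → ℝ) l - ε * (Pi.single j 1 : Fin m → ℝ) l) ∈ stdSimplex ℝ (Fin m) := by
  constructor
  · intro l
    simp only [Pi.single_apply]
    rcases eq_or_ne l k with rfl | hlk
    · rw [if_pos rfl, if_neg (fun h : l = j => hjk (h.symm))]
      have := hq0 l
      nlinarith
    · rw [if_neg hlk]
      rcases eq_or_ne l j with rfl | hlj
      · rw [if_pos rfl]
        have := hq0 l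
        nlinarith
      · rw [if_neg hlj]
        have := hq0 l
        nlinarith
  · rw [Finset.sum_sub_distrib, Finset.sum_add_distrib, ← Finset.mul_sum, ← Finset.mul_sum,
      Finset.sum_pi_single', Finset.sum_pi_single']
    simp [hq1]

set_option maxHeartbeats 2000000 in
theorem l1_impossibility {m n : ℕ} (hm : 3 ≤ m) (hn : 3 ≤ n) :
    ¬ ∃ f : (Fin n → Fin m → ℝ) → (Fin m → ℝ),
      -- f is a mechanism: it maps profiles of distributions to distributions
      (∀ P : Fin n → Fin m → ℝ, (∀ i, P i ∈ stdSimplex ℝ (Fin m)) →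
        f P ∈ stdSimplex ℝ (Fin m)) ∧
      -- efficiency
      (∀ P : Fin n → Fin m → ℝ, (∀ i, P i ∈ stdSimplex ℝ (Fin m)) →
        ¬ ∃ q' ∈ stdSimplex ℝ (Fin m),
          (∀ i, l1u (P i) (f P) ≤ l1u (P i) q') ∧ (∃ i, l1u (P i) (f P) < l1u (P i) q')) ∧
      -- strategyproofness
      (∀ P : Fin n → Fin m → ℝ, (∀ i, P i ∈ stdSimplex ℝ (Fin m)) →
        ∀ i, ∀ p' ∈ stdSimplex ℝ (Fin m),
          l1u (P i) (f (Function.update P i p')) ≤ l1u (P i) (f P)) ∧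
      -- proportionality
      (∀ P : Fin n → Fin m → ℝ, (∀ i, P i ∈ stdSimplex ℝ (Fin m)) →
        (∀ i, ∃ j, P i = Pi.single j 1) →
        ∀ j, f P j = ((Finset.univ.filter (fun i => P i j = 1)).card : ℝ) / (n : ℝ)) := by
  rintro ⟨f, hmech, heff, hsp, hprop⟩
  haveI : NeZero m := ⟨by omega⟩
  -- basic constants
  set N : ℝ := (n : ℝ) with hNdef
  have hN3 : (3:ℝ) ≤ N := by rw [hNdef]; exact_mod_cast hn
  have hNpos : (0:ℝ) < N := by linarith
  have hNi : (0:ℝ) < 1/N := by positivity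
  set A : ℝ := 5/6 * (1/N) with hAdef
  have hA0 : 0 ≤ A := by positivity
  have hAlt : A < 1/N := by
    rw [hAdef]
    nlinarith
  have hA1 : A ≤ 1 := by
    have : 1/N ≤ 1 := by
      rw [div_le_one hNpos]; linarith
    linarith
  -- the three coordinates
  obtain ⟨c0, hc0v⟩ : ∃ c : Fin m, (c : ℕ) = 0 := ⟨⟨0, by omega⟩, rfl⟩
  obtain ⟨c1, hc1v⟩ : ∃ c : Fin m, (c : ℕ) = 1 := ⟨⟨1, by omega⟩, rfl⟩
  obtain ⟨c2, hc2v⟩ : ∃ c : Fin m, (c : ℕ) = 2 := ⟨⟨2, by omega⟩, rfl⟩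
  have h01 : c0 ≠ c1 := fun h => by rw [Fin.ext_iff, hc0v, hc1v] at h; omega
  have h02 : c0 ≠ c2 := fun h => by rw [Fin.ext_iff, hc0v, hc2v] at h; omega
  have h12 : c1 ≠ c2 := fun h => by rw [Fin.ext_iff, hc1v, hc2v] at h; omega
  set E2 : Fin m → ℝ := Pi.single c2 1 with hE2def
  have hE2mem : E2 ∈ stdSimplex ℝ (Fin m) := single_mem c2
  have hE2val : ∀ j : Fin m, j ≠ c2 → E2 j = 0 := by
    intro j hj
    rw [hE2def, Pi.single_apply, if_neg hj]
  have hE2c2 : E2 c2 = 1 := by rw [hE2def, Pi.single_apply, if_pos rfl]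
  -- the pinning lemma
  have pin : ∀ (sμ sE : Fin n), sμ ≠ sE →
      ∀ (cP cE : Fin m), cP ≠ cE → cP ≠ c2 → cE ≠ c2 →
      ∀ Y : Fin n → Fin m → ℝ,
      Y = (fun i => if i = sμ then (fun j => (Pi.single cP A : Fin m → ℝ) j + (Pi.single c2 (1-A) : Fin m → ℝ) j)
            else if i = sE then Pi.single cE 1 else E2) →
      f Y cE = 1/N ∧ f Y c2 = 1 - 1/N ∧ (∀ j, j ≠ cE → j ≠ c2 → f Y j = 0) := by
    intro sμ sE hss cP cE hPE hP2 hE2' Y hYeq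
    -- a third agent
    obtain ⟨iz, hizmem, hiznot⟩ : ∃ iz ∈ (Finset.univ : Finset (Fin n)),
        iz ∉ ({sμ, sE} : Finset (Fin n)) := by
      have hcard : ({sμ, sE} : Finset (Fin n)).card = 2 := Finset.card_pair hss
      have : ({sμ, sE} : Finset (Fin n)) ⊂ Finset.univ := by
        rw [Finset.ssubset_univ_iff]
        intro h
        rw [h, Finset.card_univ, Fintype.card_fin] at hcard
        omega
      obtain ⟨x, hx1, hx2⟩ := Finset.exists_of_ssubset this
      exact ⟨x, hx1, hx2⟩
    rw [Finset.mem_insert, Finset.mem_singleton] at hiznot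
    push_neg at hiznot
    obtain ⟨hzμ, hzE⟩ := hiznot
    set μ : Fin m → ℝ := fun j => (Pi.single cP A : Fin m → ℝ) j + (Pi.single c2 (1-A) : Fin m → ℝ) j with hμdef
    have hμmem : μ ∈ stdSimplex ℝ (Fin m) := pair_mem cP c2 A hA0 hA1
    have hμcP : μ cP = A := by
      rw [hμdef]; dsimp only
      rw [Pi.single_apply, Pi.single_apply, if_pos rfl, if_neg hP2]; ring
    have hμcE : μ cE = 0 := by
      rw [hμdef]; dsimp only
      rw [Pi.single_apply, Pi.single_apply, if_neg (fun h : cE = cP => hPE h.symm),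
        if_neg hE2']; ring
    have hμc2 : μ c2 = 1 - A := by
      rw [hμdef]; dsimp only
      rw [Pi.single_apply, Pi.single_apply, if_neg (fun h : c2 = cP => hP2 h.symm),
        if_pos rfl]; ring
    have hμsupp : ∀ j, j ≠ cP → j ≠ cE → j ≠ c2 → μ j = 0 := by
      intro j hj0 hj1 hj2
      rw [hμdef]; dsimp only
      rw [Pi.single_apply, Pi.single_apply, if_neg hj0, if_neg hj2]; ring
    have hEEcP : (Pi.single cE 1 : Fin m → ℝ) cP = 0 := by
      rw [Pi.single_apply, if_neg hPE]
    have hEEcE : (Pi.single cE 1 : Fin m → ℝ) cE = 1 := by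
      rw [Pi.single_apply, if_pos rfl]
    have hEEc2 : (Pi.single cE 1 : Fin m → ℝ) c2 = 0 := by
      rw [Pi.single_apply, if_neg (fun h : c2 = cE => hE2' h.symm)]
    have hEEsupp : ∀ j, j ≠ cP → j ≠ cE → j ≠ c2 → (Pi.single cE 1 : Fin m → ℝ) j = 0 := by
      intro j _ hj1 _
      rw [Pi.single_apply, if_neg hj1]
    have hE2supp : ∀ j, j ≠ cP → j ≠ cE → j ≠ c2 → E2 j = 0 := fun j _ _ hj2 => hE2val j hj2
    have hE2cP : E2 cP = 0 := hE2val cP hP2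
    have hE2cE : E2 cE = 0 := hE2val cE hE2'
    -- the base single-minded profile
    set B : Fin n → Fin m → ℝ := fun i => if i = sE then Pi.single cE 1 else E2 with hBdef
    have hYval : ∀ i, Y i = (if i = sμ then μ else if i = sE then Pi.single cE 1 else E2) := by
      intro i; rw [hYeq]
    have hYmem : ∀ i, Y i ∈ stdSimplex ℝ (Fin m) := by
      intro i
      rw [hYval i]
      split_ifs
      · exact hμmem
      · exact single_mem cE
      · exact hE2mem
    have hBval : ∀ i, B i = (if i = sE then Pi.single cE 1 else E2) := fun i => by rw [hBdef]
    have hBmem : ∀ i, B i ∈ stdSimplex ℝ (Fin m) := by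
      intro i
      rw [hBval i]
      split_ifs
      · exact single_mem cE
      · exact hE2mem
    have hupd1 : Function.update B sμ μ = Y := by
      funext i
      rcases eq_or_ne i sμ with rfl | hi
      · rw [Function.update_self, hYval i, if_pos rfl]
      · rw [Function.update_of_ne hi, hYval i, hBval i, if_neg hi]
    have hupd2 : Function.update Y sμ E2 = B := by
      funext i
      rcases eq_or_ne i sμ with rfl | hi
      · rw [Function.update_self, hBval i, if_neg hss]
      · rw [Function.update_of_ne hi, hYval i, hBval i, if_neg hi]
    -- proportionality at B
    have hBsingle : ∀ i, ∃ j, B i = Pi.single j 1 := by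
      intro i
      rcases eq_or_ne i sE with rfl | hi
      · exact ⟨cE, by rw [hBval i, if_pos rfl]⟩
      · exact ⟨c2, by rw [hBval i, if_neg hi, hE2def]⟩
    have hPB := hprop B hBmem hBsingle
    have hfBcE : f B cE = 1/N := by
      have hset : Finset.univ.filter (fun i => B i cE = 1) = {sE} := by
        ext i
        simp only [Finset.mem_filter, Finset.mem_univ, true_and, Finset.mem_singleton]
        rw [hBval i]
        rcases eq_or_ne i sE with rfl | hi
        · rw [if_pos rfl, hEEcE]
          simp
        · rw [if_neg hi, hE2cE]
          simp [hi]
      rw [hPB cE, hset, Finset.card_singleton, Nat.cast_one]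
    have hfBc2 : f B c2 = 1 - 1/N := by
      have hset : Finset.univ.filter (fun i => B i c2 = 1) = Finset.univ \ {sE} := by
        ext i
        simp only [Finset.mem_filter, Finset.mem_univ, true_and, Finset.mem_sdiff,
          Finset.mem_singleton]
        rw [hBval i]
        rcases eq_or_ne i sE with rfl | hi
        · rw [if_pos rfl, hEEc2]
          simp
        · rw [if_neg hi, hE2c2]
          simp [hi]
      rw [hPB c2, hset, Finset.card_sdiff_of_subset (by simp), Finset.card_univ, Fintype.card_fin,
        Finset.card_singleton]
      rw [Nat.cast_sub (by omega), Nat.cast_one]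
      field_simp
      rw [hNdef]
    have hfBz : ∀ j, j ≠ cE → j ≠ c2 → f B j = 0 := by
      intro j hj1 hj2
      have hset : Finset.univ.filter (fun i => B i j = 1) = ∅ := by
        apply Finset.filter_false_of_mem
        intro i _
        rw [hBval i]
        rcases eq_or_ne i sE with rfl | hi
        · rw [if_pos rfl, Pi.single_apply, if_neg hj1]
          norm_num
        · rw [if_neg hi, hE2val j hj2]
          norm_num
      rw [hPB j, hset, Finset.card_empty, Nat.cast_zero, zero_div]
    have hfBmem := hmech B hBmem
    obtain ⟨hfB0, hfB1⟩ := hfBmem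
    obtain ⟨hq0, hq1⟩ := hmech Y hYmem
    -- generic abs facts
    have habs0 : ∀ x : ℝ, 0 ≤ x → |0 - x| = x := by
      intro x hx
      rw [zero_sub, abs_neg, abs_of_nonneg hx]
    -- step (a): q c2 ≤ 1 - 1/N
    have hstepa : f Y c2 ≤ 1 - 1/N := by
      have ha := hsp B hBmem sμ μ hμmem
      rw [hupd1] at ha
      have hBsμ : B sμ = E2 := by rw [hBval sμ, if_neg hss]
      rw [hBsμ] at ha
      simp only [l1u, neg_le_neg_iff] at ha
      rw [dist_sum3 cP cE c2 hPE hP2 hE2' E2 (f B) hfB0 hfB1 hE2supp,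
        dist_sum3 cP cE c2 hPE hP2 hE2' E2 (f Y) hq0 hq1 hE2supp] at ha
      rw [hE2cP, hE2cE, hE2c2, hfBz cP hPE hP2, hfBcE, hfBc2] at ha
      have g1 : |(0:ℝ) - f Y cP| = f Y cP := habs0 _ (hq0 cP)
      have g2 : |(0:ℝ) - f Y cE| = f Y cE := habs0 _ (hq0 cE)
      have htri := tri_le_one cP cE c2 hPE hP2 hE2' (f Y) hq0 hq1
      have g3 : |1 - f Y c2| = 1 - f Y c2 := abs_of_nonneg (by linarith [hq0 cP, hq0 cE])
      have g4 : |(0:ℝ) - 0| = 0 := by simp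
      have g5 : |(0:ℝ) - 1/N| = 1/N := habs0 _ hNi.le
      have g6 : |1 - (1 - 1/N)| = 1/N := by
        rw [show (1:ℝ) - (1 - 1/N) = 1/N by ring]
        exact abs_of_nonneg hNi.le
      rw [g1, g2, g3, g4, g5, g6] at ha
      linarith
    -- step (b): coordinates other than cE, c2 vanish
    have hstepb : ∀ j, j ≠ cE → j ≠ c2 → f Y j = 0 := by
      intro j hjE hj2
      by_contra hjq
      have hjpos : 0 < f Y j := (hq0 j).lt_of_ne (Ne.symm hjq)
      have hgap : 0 < 1 - A - f Y c2 := by linarith [hstepa, hAlt]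
      set ε : ℝ := min (f Y j) (1 - A - f Y c2) with hεdef
      have hε0 : 0 < ε := lt_min hjpos hgap
      have hεj : ε ≤ f Y j := min_le_left _ _
      have hεg : ε ≤ 1 - A - f Y c2 := min_le_right _ _
      set q' : Fin m → ℝ := fun l => f Y l + ε * (Pi.single c2 1 : Fin m → ℝ) l - ε * (Pi.single j 1 : Fin m → ℝ) l
        with hq'def
      have hq'mem := move_mem (f Y) hq0 hq1 j c2 hj2 ε hε0.le hεj
      obtain ⟨hq'0, hq'1⟩ := hq'mem
      have hq'c2 : q' c2 = f Y c2 + ε := by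
        rw [hq'def]; dsimp only
        rw [Pi.single_apply, Pi.single_apply, if_pos rfl, if_neg (fun h : c2 = j => hj2 h.symm)]
        ring
      have hq'cE : q' cE = f Y cE := by
        rw [hq'def]; dsimp only
        rw [Pi.single_apply, Pi.single_apply, if_neg hE2',
          if_neg (fun h : cE = j => hjE h.symm)]
        ring
      have hq'cP_le : q' cP ≤ f Y cP ∧ f Y cP - ε ≤ q' cP := by
        rw [hq'def]; dsimp only
        rw [Pi.single_apply, Pi.single_apply, if_neg hP2]
        rcases eq_or_ne cP j with rfl | hPj
        · rw [if_pos rfl]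
          constructor <;> nlinarith
        · rw [if_neg hPj]
          constructor <;> nlinarith
      have hsum' : q' cP + q' cE + q' c2 ≤ f Y cP + f Y cE + f Y c2 + ε := by
        have h := hq'cP_le.1
        rw [hq'cE, hq'c2]
        linarith
      have hsum'' : f Y cP + f Y cE + f Y c2 ≤ q' cP + q' cE + q' c2 := by
        have h := hq'cP_le.2
        rw [hq'cE, hq'c2]
        linarith
      refine heff Y hYmem ⟨q', ⟨hq'0, hq'1⟩, ?_, ⟨iz, ?_⟩⟩
      · -- everyone weakly improves
        intro i
        simp only [l1u, neg_le_neg_iff]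
        rw [hYval i]
        split_ifs with hi1 hi2
        · -- peak μ
          rw [dist_sum3 cP cE c2 hPE hP2 hE2' μ q' hq'0 hq'1 hμsupp,
            dist_sum3 cP cE c2 hPE hP2 hE2' μ (f Y) hq0 hq1 hμsupp,
            hμcP, hμcE, hμc2, hq'cE, hq'c2]
          have f1 : |A - q' cP| ≤ |A - f Y cP| + (f Y cP - q' cP) := by
            have h := abs_add_le (A - f Y cP) (f Y cP - q' cP)
            rw [show A - f Y cP + (f Y cP - q' cP) = A - q' cP by ring] at h
            have : |f Y cP - q' cP| = f Y cP - q' cP :=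
              abs_of_nonneg (by linarith [hq'cP_le.1])
            linarith
          have f2 : |1 - A - (f Y c2 + ε)| = 1 - A - f Y c2 - ε := by
            rw [show (1:ℝ) - A - (f Y c2 + ε) = 1 - A - f Y c2 - ε by ring]
            exact abs_of_nonneg (by linarith)
          have f3 : 1 - A - f Y c2 ≤ |1 - A - f Y c2| := le_abs_self _
          have h := hq'cP_le.2
          linarith
        · -- peak `Pi.single cE 1`
          rw [dist_sum3 cP cE c2 hPE hP2 hE2' _ q' hq'0 hq'1 hEEsupp,
            dist_sum3 cP cE c2 hPE hP2 hE2' _ (f Y) hq0 hq1 hEEsupp,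
            hEEcP, hEEcE, hEEc2, hq'cE, hq'c2]
          have g1 : |(0:ℝ) - q' cP| = q' cP := habs0 _ (hq'0 cP)
          have g2 : |(0:ℝ) - f Y cP| = f Y cP := habs0 _ (hq0 cP)
          have g3 : |(0:ℝ) - (f Y c2 + ε)| = f Y c2 + ε := habs0 _ (by linarith [hq0 c2])
          have g4 : |(0:ℝ) - f Y c2| = f Y c2 := habs0 _ (hq0 c2)
          have h1 := hq'cP_le.1
          have h2 := hq'cP_le.2
          linarith
        · -- peak E2
          rw [dist_sum3 cP cE c2 hPE hP2 hE2' E2 q' hq'0 hq'1 hE2supp,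
            dist_sum3 cP cE c2 hPE hP2 hE2' E2 (f Y) hq0 hq1 hE2supp,
            hE2cP, hE2cE, hE2c2, hq'cE, hq'c2]
          have g1 : |(0:ℝ) - q' cP| = q' cP := habs0 _ (hq'0 cP)
          have g2 : |(0:ℝ) - f Y cP| = f Y cP := habs0 _ (hq0 cP)
          have g3 : |(0:ℝ) - f Y cE| = f Y cE := habs0 _ (hq0 cE)
          have g5 : |1 - (f Y c2 + ε)| = 1 - (f Y c2 + ε) :=
            abs_of_nonneg (by linarith [hA0])
          have g6 : |1 - f Y c2| = 1 - f Y c2 := by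
            have htri := tri_le_one cP cE c2 hPE hP2 hE2' (f Y) hq0 hq1
            exact abs_of_nonneg (by linarith [hq0 cP, hq0 cE])
          have h1 := hq'cP_le.1
          have h2 := hq'cP_le.2
          linarith
      · -- agent iz strictly improves
        simp only [l1u, neg_lt_neg_iff]
        have hYiz : Y iz = E2 := by rw [hYval iz, if_neg hzμ, if_neg hzE]
        rw [hYiz]
        rw [dist_sum3 cP cE c2 hPE hP2 hE2' E2 q' hq'0 hq'1 hE2supp,
          dist_sum3 cP cE c2 hPE hP2 hE2' E2 (f Y) hq0 hq1 hE2supp,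
          hE2cP, hE2cE, hE2c2, hq'cE, hq'c2]
        have g1 : |(0:ℝ) - q' cP| = q' cP := habs0 _ (hq'0 cP)
        have g2 : |(0:ℝ) - f Y cP| = f Y cP := habs0 _ (hq0 cP)
        have g3 : |(0:ℝ) - f Y cE| = f Y cE := habs0 _ (hq0 cE)
        have g5 : |1 - (f Y c2 + ε)| = 1 - (f Y c2 + ε) :=
          abs_of_nonneg (by linarith [hA0])
        have g6 : |1 - f Y c2| = 1 - f Y c2 := by
          have htri := tri_le_one cP cE c2 hPE hP2 hE2' (f Y) hq0 hq1
          exact abs_of_nonneg (by linarith [hq0 cP, hq0 cE])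
        have h1 := hq'cP_le.1
        have h2 := hq'cP_le.2
        linarith
    -- step (c)
    have hqcP : f Y cP = 0 := hstepb cP hPE hP2
    have htr : f Y cP + f Y cE + f Y c2 = 1 :=
      tri_eq_one cP cE c2 hPE hP2 hE2' (f Y) hq1 (fun j _ hj1 hj2 => hstepb j hj1 hj2)
    -- step (d): q c2 ≥ 1 - 1/N
    have hstepd : 1 - 1/N ≤ f Y c2 := by
      have hd := hsp Y hYmem sμ E2 hE2mem
      rw [hupd2] at hd
      have hYsμ : Y sμ = μ := by rw [hYval sμ, if_pos rfl]
      rw [hYsμ] at hd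
      simp only [l1u, neg_le_neg_iff] at hd
      rw [dist_sum3 cP cE c2 hPE hP2 hE2' μ (f Y) hq0 hq1 hμsupp,
        dist_sum3 cP cE c2 hPE hP2 hE2' μ (f B) hfB0 hfB1 hμsupp,
        hμcP, hμcE, hμc2, hqcP, hfBz cP hPE hP2, hfBcE, hfBc2] at hd
      have g1 : |A - (0:ℝ)| = A := by rw [sub_zero, abs_of_nonneg hA0]
      have g2 : |(0:ℝ) - f Y cE| = f Y cE := habs0 _ (hq0 cE)
      have g3 : |(0:ℝ) - 1/N| = 1/N := habs0 _ hNi.le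
      have g4 : |1 - A - (1 - 1/N)| = 1/N - A := by
        rw [show (1:ℝ) - A - (1 - 1/N) = 1/N - A by ring]
        exact abs_of_nonneg (by linarith [hAlt])
      have g5 : 1 - A - f Y c2 ≤ |1 - A - f Y c2| := le_abs_self _
      rw [g1, g2, g3, g4] at hd
      linarith
    have hfc2 : f Y c2 = 1 - 1/N := le_antisymm hstepa hstepd
    have hfcE : f Y cE = 1/N := by linarith
    exact ⟨hfcE, hfc2, hstepb⟩
  -- the three agents
  obtain ⟨i1, hi1v⟩ : ∃ i : Fin n, (i : ℕ) = 1 := ⟨⟨1, by omega⟩, rfl⟩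
  obtain ⟨i2, hi2v⟩ : ∃ i : Fin n, (i : ℕ) = 2 := ⟨⟨2, by omega⟩, rfl⟩
  have hi12 : i1 ≠ i2 := fun h => by rw [Fin.ext_iff, hi1v, hi2v] at h; omega
  -- mixed peaks
  set w : Fin m → ℝ := fun j => (Pi.single c1 A : Fin m → ℝ) j + (Pi.single c2 (1-A) : Fin m → ℝ) j with hwdef
  set v : Fin m → ℝ := fun j => (Pi.single c0 A : Fin m → ℝ) j + (Pi.single c2 (1-A) : Fin m → ℝ) j with hvdef
  have hwmem : w ∈ stdSimplex ℝ (Fin m) := pair_mem c1 c2 A hA0 hA1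
  have hvmem : v ∈ stdSimplex ℝ (Fin m) := pair_mem c0 c2 A hA0 hA1
  -- the profile X and its two deviations
  set X : Fin n → Fin m → ℝ := fun i => if i = i2 then v else if i = i1 then w else E2
    with hXdef
  have hXval : ∀ i, X i = (if i = i2 then v else if i = i1 then w else E2) := fun i => by
    rw [hXdef]
  have hXmem : ∀ i, X i ∈ stdSimplex ℝ (Fin m) := by
    intro i
    rw [hXval i]
    split_ifs
    · exact hvmem
    · exact hwmem
    · exact hE2mem
  set Y1 : Fin n → Fin m → ℝ := fun i => if i = i2 then
      (fun j => (Pi.single c0 A : Fin m → ℝ) j + (Pi.single c2 (1-A) : Fin m → ℝ) j)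
    else if i = i1 then Pi.single c1 1 else E2 with hY1def
  set Y2 : Fin n → Fin m → ℝ := fun i => if i = i1 then
      (fun j => (Pi.single c1 A : Fin m → ℝ) j + (Pi.single c2 (1-A) : Fin m → ℝ) j)
    else if i = i2 then Pi.single c0 1 else E2 with hY2def
  obtain ⟨hY1cE, hY1c2, hY1z⟩ := pin i2 i1 hi12.symm c0 c1 h01 h02 h12 Y1 hY1def
  obtain ⟨hY2cE, hY2c2, hY2z⟩ := pin i1 i2 hi12 c1 c0 h01.symm h12 h02 Y2 hY2def
  -- SP at X, agent i1 deviating to e1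
  have hupd5 : Function.update X i1 (Pi.single c1 1) = Y1 := by
    funext i
    rcases eq_or_ne i i1 with rfl | hi
    · rw [Function.update_self, hY1def]
      dsimp only
      rw [if_neg hi12, if_pos rfl]
    · rw [Function.update_of_ne hi, hY1def, hXval i]
      dsimp only
      rcases eq_or_ne i i2 with rfl | hi2'
      · rw [if_pos rfl, if_pos rfl, hvdef]
      · rw [if_neg hi2', if_neg hi2', if_neg hi, if_neg hi]
  have hupd6 : Function.update X i2 (Pi.single c0 1) = Y2 := by
    funext i
    rcases eq_or_ne i i2 with rfl | hi
    · rw [Function.update_self, hY2def]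
      dsimp only
      rw [if_neg hi12.symm, if_pos rfl]
    · rw [Function.update_of_ne hi, hY2def, hXval i]
      dsimp only
      rcases eq_or_ne i i1 with rfl | hi1'
      · rw [if_pos rfl, if_neg hi, if_pos rfl, hwdef]
      · rw [if_neg hi1', if_neg hi, if_neg hi1', if_neg hi]
  have hXi1 : X i1 = w := by rw [hXval i1, if_neg hi12, if_pos rfl]
  have hXi2 : X i2 = v := by rw [hXval i2, if_pos rfl]
  -- peak value facts
  have hwc0 : w c0 = 0 := by
    rw [hwdef]; dsimp only
    rw [Pi.single_apply, Pi.single_apply, if_neg h01, if_neg h02]; ring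
  have hwc1 : w c1 = A := by
    rw [hwdef]; dsimp only
    rw [Pi.single_apply, Pi.single_apply, if_pos rfl, if_neg h12]; ring
  have hwc2 : w c2 = 1 - A := by
    rw [hwdef]; dsimp only
    rw [Pi.single_apply, Pi.single_apply, if_neg h12.symm, if_pos rfl]; ring
  have hwsupp : ∀ j, j ≠ c0 → j ≠ c1 → j ≠ c2 → w j = 0 := by
    intro j _ hj1 hj2
    rw [hwdef]; dsimp only
    rw [Pi.single_apply, Pi.single_apply, if_neg hj1, if_neg hj2]; ring
  have hvc0 : v c0 = A := by
    rw [hvdef]; dsimp only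
    rw [Pi.single_apply, Pi.single_apply, if_pos rfl, if_neg h02]; ring
  have hvc1 : v c1 = 0 := by
    rw [hvdef]; dsimp only
    rw [Pi.single_apply, Pi.single_apply, if_neg h01.symm, if_neg h12]; ring
  have hvc2 : v c2 = 1 - A := by
    rw [hvdef]; dsimp only
    rw [Pi.single_apply, Pi.single_apply, if_neg h02.symm, if_pos rfl]; ring
  have hvsupp : ∀ j, j ≠ c0 → j ≠ c1 → j ≠ c2 → v j = 0 := by
    intro j hj0 _ hj2
    rw [hvdef]; dsimp only
    rw [Pi.single_apply, Pi.single_apply, if_neg hj0, if_neg hj2]; ring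
  -- output of X
  obtain ⟨hs0, hs1⟩ := hmech X hXmem
  obtain ⟨hq10, hq11⟩ := hmech Y1 (by
    intro i
    rw [hY1def]
    dsimp only
    split_ifs
    · exact hvmem
    · exact single_mem c1
    · exact hE2mem)
  obtain ⟨hq20, hq21⟩ := hmech Y2 (by
    intro i
    rw [hY2def]
    dsimp only
    split_ifs
    · exact hwmem
    · exact single_mem c0
    · exact hE2mem)
  have habs0 : ∀ x : ℝ, 0 ≤ x → |0 - x| = x := by
    intro x hx
    rw [zero_sub, abs_neg, abs_of_nonneg hx]
  -- SP inequality 1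
  have hSP1 := hsp X hXmem i1 (Pi.single c1 1) (single_mem c1)
  rw [hupd5, hXi1] at hSP1
  simp only [l1u, neg_le_neg_iff] at hSP1
  rw [dist_sum3 c0 c1 c2 h01 h02 h12 w (f X) hs0 hs1 hwsupp,
    dist_sum3 c0 c1 c2 h01 h02 h12 w (f Y1) hq10 hq11 hwsupp,
    hwc0, hwc1, hwc2, hY1z c0 h01 h02, hY1cE, hY1c2] at hSP1
  -- SP inequality 2
  have hSP2 := hsp X hXmem i2 (Pi.single c0 1) (single_mem c0)
  rw [hupd6, hXi2] at hSP2
  simp only [l1u, neg_le_neg_iff] at hSP2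
  rw [dist_sum3 c0 c1 c2 h01 h02 h12 v (f X) hs0 hs1 hvsupp,
    dist_sum3 c0 c1 c2 h01 h02 h12 v (f Y2) hq20 hq21 hvsupp,
    hvc0, hvc1, hvc2, hY2z c1 h01.symm h12, hY2cE, hY2c2] at hSP2
  -- evaluate the constants
  have gA : |A - 1/N| = 1/N - A := by
    rw [abs_of_nonpos (by linarith [hAlt]), neg_sub]
  have gB : |(0:ℝ) - 0| = 0 := by simp
  have gC : |1 - A - (1 - 1/N)| = 1/N - A := by
    rw [show (1:ℝ) - A - (1 - 1/N) = 1/N - A by ring]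
    exact abs_of_nonneg (by linarith [hAlt])
  rw [gA, gB, gC] at hSP1 hSP2
  -- triangle inequality bounds
  have t1 : |(0:ℝ) - f X c0| = f X c0 := habs0 _ (hs0 c0)
  have t2 : A - f X c1 ≤ |A - f X c1| := le_abs_self _
  have t3 : |(0:ℝ) - f X c1| = f X c1 := habs0 _ (hs0 c1)
  have t4 : A - f X c0 ≤ |A - f X c0| := le_abs_self _
  have t5 : (0:ℝ) ≤ |1 - A - f X c2| := abs_nonneg _
  have t6 := tri_le_one c0 c1 c2 h01 h02 h12 (f X) hs0 hs1
  rw [t1] at hSP1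
  rw [t3] at hSP2
  -- final contradiction: 2A ≤ 4(1/N - A) but A = 5/6 * (1/N)
  rw [hAdef] at hSP1 hSP2 t2 t4
  linarith [hSP1, hSP2, t2, t4, t5, t6, hNi]
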